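/- Let M be a left 𝕆-module. An element m ∈ M is cyclic if and only if for all r, p ∈ 𝕆 there exists q ∈ 𝕆 such that [r,p,m] = qm, where [r,p,m] = (rp)m − r(pm) is the left associator. -/
import Mathlib


noncomputable section

open scoped Quaternion

/-- The octonions, realized as pairs of quaternions via the Cayley–Dickson construction. -/
def Octo : Type := ℍ[ℝ] × ℍ[ℝ]

namespace Octo

instance : AddCommGroup Octo := inferInstanceAs (AddCommGroup (ℍ[ℝ] × ℍ[ℝ]))
instance : Module ℝ Octo := inferInstanceAs (Module ℝ (ℍ[ℝ] × ℍ[ℝ]))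

/-- Build an octonion from a pair of quaternions. -/
def mk (a b : ℍ[ℝ]) : Octo := (a, b)

/-- First quaternion component. -/
def p1 (x : Octo) : ℍ[ℝ] := (show ℍ[ℝ] × ℍ[ℝ] from x).1

/-- Second quaternion component. -/
def p2 (x : Octo) : ℍ[ℝ] := (show ℍ[ℝ] × ℍ[ℝ] from x).2

/-- Cayley–Dickson multiplication: `(a,b)(c,d) = (ac − d̄b, da + bc̄)`. -/
instance : Mul Octo :=
  ⟨fun x y => mk (p1 x * p1 y - star (p2 y) * p2 x) (p2 y * p1 x + p2 x * star (p1 y))⟩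

instance : One Octo := ⟨mk 1 0⟩

/-- Octonion conjugation: for `x = (a,b)`, `x̄ = (ā, −b)`. -/
def conj (x : Octo) : Octo := mk (star (p1 x)) (-(p2 x))

/-- The octonion associator `[x,y,z] = (xy)z − x(yz)`. -/
def assoc (x y z : Octo) : Octo := x * y * z - x * (y * z)

/-- The octonion commutator `[x,y] = xy − yx`. -/
def comm (x y : Octo) : Octo := x * y - y * x

/-- The canonical embedding of the reals into the octonions. -/
def ofReal (r : ℝ) : Octo := r • (1 : Octo)

end Octo

section OMod

variable {M : Type*} [AddCommGroup M] [Module ℝ M]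
variable {N : Type*} [AddCommGroup N] [Module ℝ N]

/-- `IsOMod sm` says that the scalar multiplication `sm : 𝕆 × M → M` makes the real vector
space `M` a left 𝕆-module: `sm` is ℝ-bilinear, unital, and the left associator is
alternating in its two octonion arguments. -/
structure IsOMod (sm : Octo → M → M) : Prop where
  smul_add : ∀ (p : Octo) (m n : M), sm p (m + n) = sm p m + sm p n
  add_smul : ∀ (p q : Octo) (m : M), sm (p + q) m = sm p m + sm q m
  real_smul : ∀ (r : ℝ) (p : Octo) (m : M), sm (r • p) m = r • sm p m
  smul_real : ∀ (r : ℝ) (p : Octo) (m : M), sm p (r • m) = r • sm p m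
  one_smul : ∀ m : M, sm 1 m = m
  alt : ∀ (p q : Octo) (m : M),
    sm (p * q) m - sm p (sm q m) = -(sm (q * p) m - sm q (sm p m))

/-- The left associator `[p,q,m] = (pq)m − p(qm)`. -/
def oLassoc (sm : Octo → M → M) (p q : Octo) (m : M) : M :=
  sm (p * q) m - sm p (sm q m)

/-- The set `𝒜(M)` of associative elements: `[p,q,m] = 0` for all `p,q ∈ 𝕆`. -/
def assocSet (sm : Octo → M → M) : Set M :=
  {m | ∀ p q : Octo, oLassoc sm p q m = 0}

/-- The set `𝒜⁻(M)` of conjugate associative elements: `(pq)m = q(pm)` for all `p,q ∈ 𝕆`. -/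
def conjAssocSet (sm : Octo → M → M) : Set M :=
  {m | ∀ p q : Octo, sm (p * q) m = sm q (sm p m)}

/-- A homomorphism of left 𝕆-modules: an ℝ-linear map commuting with 𝕆-scalar
multiplication. -/
def IsOHom (sm : Octo → M → M) (sm' : Octo → N → N) (f : M → N) : Prop :=
  IsLinearMap ℝ f ∧ ∀ (p : Octo) (m : M), f (sm p m) = sm' p (f m)

/-- Two left 𝕆-modules are isomorphic if there is a bijective homomorphism between them. -/
def OIso (sm : Octo → M → M) (sm' : Octo → N → N) : Prop :=
  ∃ f : M → N, IsOHom sm sm' f ∧ Function.Bijective f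

/-- A submodule: a real subspace closed under 𝕆-scalar multiplication. -/
structure IsOSubmodule (sm : Octo → M → M) (S : Set M) : Prop where
  zero_mem : (0 : M) ∈ S
  add_mem : ∀ {x y : M}, x ∈ S → y ∈ S → x + y ∈ S
  smul_mem : ∀ (r : ℝ) {x : M}, x ∈ S → r • x ∈ S
  osmul_mem : ∀ (p : Octo) {x : M}, x ∈ S → sm p x ∈ S

/-- `⟨m⟩_𝕆`, the smallest submodule containing `m`, as a set. -/
def genSet (sm : Octo → M → M) (m : M) : Set M :=
  ⋂₀ {S : Set M | IsOSubmodule sm S ∧ m ∈ S}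

/-- An element `m` is cyclic if `⟨m⟩_𝕆 = 𝕆m`. -/
def IsOCyclic (sm : Octo → M → M) (m : M) : Prop :=
  genSet sm m = {x | ∃ p : Octo, x = sm p m}

/-- 𝕆-linear independence of a subset `S ⊆ M`: any finite 𝕆-linear combination of
distinct elements of `S` that vanishes has all coefficients zero. -/
def OLinIndep (sm : Octo → M → M) (S : Set M) : Prop :=
  ∀ (n : ℕ) (s : Fin n → M) (r : Fin n → Octo), Function.Injective s → (∀ i, s i ∈ S) →
    (∑ i, sm (r i) (s i)) = 0 → ∀ i, r i = 0

end OMod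

/-- The canonical left 𝕆-module structure on 𝕆 itself. -/
def oSmul : Octo → Octo → Octo := fun p x => p * x

/-- The left 𝕆-module structure `𝕆̄` on 𝕆: `p ·̂ x = p̄x`. -/
def oBarSmul : Octo → Octo → Octo := fun p x => Octo.conj p * x

/-- `m` is cyclic iff for all `r, p ∈ 𝕆` there is `q ∈ 𝕆` with `[r,p,m] = qm`. -/
theorem stmt17 {M : Type*} [AddCommGroup M] [Module ℝ M]
    (sm : Octo → M → M) (h : IsOMod sm) (m : M) :
    IsOCyclic sm m ↔ ∀ r p : Octo, ∃ q : Octo, oLassoc sm r p m = sm q m := by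
  have hneg : ∀ (b : Octo) (x : M), sm (-b) x = -sm b x := by
    intro b x
    rw [← neg_one_smul ℝ b, h.real_smul, neg_one_smul]
  have hsubsm : ∀ (a b : Octo) (x : M), sm (a - b) x = sm a x - sm b x := by
    intro a b x
    rw [sub_eq_add_neg, h.add_smul, hneg, sub_eq_add_neg]
  have hz : sm (0 : Octo) m = 0 := by
    have h0 := h.add_smul 0 0 m
    rw [add_zero] at h0
    exact (left_eq_add.mp h0)
  constructor
  · intro hc r p
    have hm : m ∈ genSet sm m := fun S hS => hS.2
    have hmem : ∀ x, x ∈ genSet sm m → ∀ q : Octo, sm q x ∈ genSet sm m := by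
      intro x hx q S hS
      exact hS.1.osmul_mem q (hx S hS)
    have hsub : ∀ x y : M, x ∈ genSet sm m → y ∈ genSet sm m →
        x - y ∈ genSet sm m := by
      intro x y hx hy S hS
      have := hS.1.add_mem (hx S hS) (hS.1.smul_mem (-1) (hy S hS))
      simpa [sub_eq_add_neg] using this
    have h3 : oLassoc sm r p m ∈ genSet sm m :=
      hsub _ _ (hmem m hm (r * p)) (hmem _ (hmem m hm p) r)
    rw [hc] at h3
    obtain ⟨q, hq⟩ := h3
    exact ⟨q, hq⟩
  · intro ha
    have hT : IsOSubmodule sm {x | ∃ p : Octo, x = sm p m} := by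
      constructor
      · exact ⟨0, hz.symm⟩
      · rintro x y ⟨p, rfl⟩ ⟨q, rfl⟩
        exact ⟨p + q, (h.add_smul p q m).symm⟩
      · rintro r x ⟨p, rfl⟩
        exact ⟨r • p, (h.real_smul r p m).symm⟩
      · rintro p x ⟨q, rfl⟩
        obtain ⟨q', hq'⟩ := ha p q
        refine ⟨p * q - q', ?_⟩
        rw [hsubsm, ← hq', oLassoc]
        abel
    have hmT : m ∈ {x : M | ∃ p : Octo, x = sm p m} := ⟨1, (h.one_smul m).symm⟩
    apply Set.Subset.antisymm
    · intro x hx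
      exact hx _ ⟨hT, hmT⟩
    · rintro x ⟨p, rfl⟩ S hS
      exact hS.1.osmul_mem p hS.2
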